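/- Let b_j = (j+1)^{1-α} - j^{1-α} for α ∈ (0,1), extended by b_{-k} := b_k. For any N ≥ 1 and any vectors w_0, …, w_{N-1} in a real inner product space H, the double sum Σ_{k=0}^{N-1} Σ_{j=0}^{N-1} b_{|k-j|} ⟨w_j, w_k⟩ is nonnegative. -/

import Mathlib

open Finset Set

-- midpoint concavity of rpow on [0,∞), p ∈ [0,1]
lemma aux_mid_pos {p : ℝ} (hp0 : 0 ≤ p) (hp1 : p ≤ 1) {x : ℝ} (hx : 0 ≤ x) :
    x ^ p + (x + 2) ^ p ≤ 2 * (x + 1) ^ p := by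
  have h := (Real.concaveOn_rpow hp0 hp1).2 (Set.mem_Ici.mpr hx)
    (Set.mem_Ici.mpr (by linarith : (0:ℝ) ≤ x + 2))
    (by norm_num : (0:ℝ) ≤ 1/2) (by norm_num : (0:ℝ) ≤ 1/2) (by norm_num)
  simp only [smul_eq_mul] at h
  have e : (1/2 : ℝ) * x + (1/2 : ℝ) * (x + 2) = x + 1 := by ring
  rw [e] at h
  linarith

-- midpoint convexity of x ↦ x^(-p) on (0,∞), p ∈ (0,1)
lemma aux_mid_neg {p : ℝ} (hp0 : 0 < p) (hp1 : p < 1) {x : ℝ} (hx : 0 < x) :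
    2 * (x + 1) ^ (-p) ≤ x ^ (-p) + (x + 2) ^ (-p) := by
  have ha : 0 < x ^ p := Real.rpow_pos_of_pos hx p
  have hb : 0 < (x + 2) ^ p := Real.rpow_pos_of_pos (by linarith) p
  have hc : 0 < (x + 1) ^ p := Real.rpow_pos_of_pos (by linarith) p
  have hmid : x ^ p + (x + 2) ^ p ≤ 2 * (x + 1) ^ p := aux_mid_pos hp0.le hp1.le hx.le
  rw [Real.rpow_neg hx.le, Real.rpow_neg (by linarith : (0:ℝ) ≤ x + 1),
    Real.rpow_neg (by linarith : (0:ℝ) ≤ x + 2)]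
  rw [inv_eq_one_div, inv_eq_one_div, inv_eq_one_div, div_add_div _ _ ha.ne' hb.ne',
    mul_one_div, div_le_div_iff₀ hc (mul_pos ha hb)]
  nlinarith [mul_le_mul_of_nonneg_left hmid (by positivity : (0:ℝ) ≤ x ^ p + (x + 2) ^ p),
    sq_nonneg (x ^ p - (x + 2) ^ p)]

-- φ(x) = 2(x+1)^β − x^β − (x+2)^β is antitone on [0,∞) for β ∈ (0,1)
lemma aux_phi_antitone {β : ℝ} (hβ0 : 0 < β) (hβ1 : β < 1) :
    AntitoneOn (fun x : ℝ => 2 * (x + 1) ^ β - x ^ β - (x + 2) ^ β) (Set.Ici 0) := by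
  have hcont : Continuous (fun x : ℝ => 2 * (x + 1) ^ β - x ^ β - (x + 2) ^ β) := by
    have h0 : Continuous (fun x : ℝ => x ^ β) :=
      continuous_iff_continuousAt.mpr fun x => Real.continuousAt_rpow_const x β (Or.inr hβ0.le)
    fun_prop
  have hder : ∀ x : ℝ, x ∈ interior (Set.Ici (0:ℝ)) →
      HasDerivAt (fun x : ℝ => 2 * (x + 1) ^ β - x ^ β - (x + 2) ^ β)
        (β * (2 * (x + 1) ^ (β - 1) - x ^ (β - 1) - (x + 2) ^ (β - 1))) x := by
    intro x hx
    rw [interior_Ici, Set.mem_Ioi] at hx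
    have h0 : HasDerivAt (fun x : ℝ => x ^ β) (β * x ^ (β - 1)) x :=
      Real.hasDerivAt_rpow_const (Or.inl hx.ne')
    have h1 : HasDerivAt (fun x : ℝ => (x + 1) ^ β) (1 * β * (x + 1) ^ (β - 1)) x :=
      ((hasDerivAt_id x).add_const 1).rpow_const (Or.inl (by positivity))
    have h2 : HasDerivAt (fun x : ℝ => (x + 2) ^ β) (1 * β * (x + 2) ^ (β - 1)) x :=
      ((hasDerivAt_id x).add_const 2).rpow_const (Or.inl (by positivity))
    have := ((h1.const_mul 2).sub h0).sub h2
    exact this.congr_deriv (by ring)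
  apply antitoneOn_of_deriv_nonpos (convex_Ici 0) hcont.continuousOn
  · intro x hx
    exact (hder x hx).differentiableAt.differentiableWithinAt
  · intro x hx
    rw [(hder x hx).deriv]
    rw [interior_Ici, Set.mem_Ioi] at hx
    have := aux_mid_neg (p := 1 - β) (by linarith) (by linarith) hx
    rw [(by ring : -(1 - β) = β - 1)] at this
    nlinarith

-- telescoping identity
lemma aux_tele (u : ℕ → ℝ) (n : ℕ) : ∀ M, n ≤ M →
    ∑ m ∈ Finset.range M, (u m - 2 * u (m + 1) + u (m + 2)) * ((m + 1 - n : ℕ) : ℝ)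
      = u n - u M - ((M - n : ℕ) : ℝ) * (u M - u (M + 1)) := by
  refine Nat.le_induction ?_ ?_
  · rw [Finset.sum_eq_zero, Nat.sub_self]
    · simp
    · intro m hm
      rw [Finset.mem_range] at hm
      rw [Nat.sub_eq_zero_of_le (by omega)]
      simp
  · intro M hnM ih
    rw [Finset.sum_range_succ, ih]
    have e1 : (M + 1 - n : ℕ) = (M - n : ℕ) + 1 := by omega
    rw [e1]
    push_cast
    ring

-- counting lemma
lemma aux_cnt {N m j k : ℕ} (hj : j < N) (hk : k < N) :
    ((m + 1 - ((k : ℤ) - (j : ℤ)).natAbs : ℕ) : ℝ)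
      = ∑ t ∈ Finset.range (N + m),
          (if j ≤ t ∧ t ≤ j + m then (1:ℝ) else 0) * (if k ≤ t ∧ t ≤ k + m then (1:ℝ) else 0) := by
  have e1 : ∀ t, (if j ≤ t ∧ t ≤ j + m then (1:ℝ) else 0) * (if k ≤ t ∧ t ≤ k + m then (1:ℝ) else 0)
      = if (j ≤ t ∧ t ≤ j + m) ∧ (k ≤ t ∧ t ≤ k + m) then (1:ℝ) else 0 := by
    intro t; split_ifs <;> simp_all
  rw [Finset.sum_congr rfl fun t _ => e1 t, Finset.sum_boole]
  have e2 : Finset.filter (fun t => (j ≤ t ∧ t ≤ j + m) ∧ (k ≤ t ∧ t ≤ k + m))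
      (Finset.range (N + m)) = Finset.Icc (max j k) (min j k + m) := by
    ext t
    simp only [Finset.mem_filter, Finset.mem_range, Finset.mem_Icc]
    omega
  rw [e2, Nat.card_Icc]
  congr 1
  omega

-- inner product expansion of a quadratic form
lemma aux_inner {H : Type*} [NormedAddCommGroup H] [InnerProductSpace ℝ H]
    (s : Finset ℕ) (a : ℕ → ℝ) (w : ℕ → H) :
    ∑ k ∈ s, ∑ j ∈ s, (a j * a k) * (inner ℝ (w j) (w k) : ℝ)
      = inner ℝ (∑ j ∈ s, a j • w j) (∑ k ∈ s, a k • w k) := by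
  rw [inner_sum]
  refine Finset.sum_congr rfl fun k _ => ?_
  rw [real_inner_smul_right, sum_inner, Finset.mul_sum]
  refine Finset.sum_congr rfl fun j _ => ?_
  rw [real_inner_smul_left]; ring

open scoped RealInnerProductSpace

theorem stmt6 {H : Type*} [NormedAddCommGroup H] [InnerProductSpace ℝ H]
    (α : ℝ) (hα0 : 0 < α) (hα1 : α < 1)
    (b : ℕ → ℝ) (hb : ∀ j : ℕ, b j = ((j : ℝ) + 1) ^ (1 - α) - (j : ℝ) ^ (1 - α))
    (N : ℕ) (hN : 1 ≤ N) (w : ℕ → H) :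
    0 ≤ ∑ k ∈ Finset.range N, ∑ j ∈ Finset.range N,
        b ((k : ℤ) - (j : ℤ)).natAbs * ⟪w j, w k⟫ := by
  have hβ0 : (0:ℝ) < 1 - α := by linarith
  have hβ1 : (1:ℝ) - α < 1 := by linarith
  -- basic properties of b
  have b_nonneg : ∀ j : ℕ, 0 ≤ b j := by
    intro j
    rw [hb]
    have := Real.rpow_le_rpow (by positivity : (0:ℝ) ≤ (j:ℝ))
      (by linarith : (j:ℝ) ≤ (j:ℝ) + 1) hβ0.le
    linarith
  have b_anti : ∀ j : ℕ, b (j + 1) ≤ b j := by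
    intro j
    rw [hb, hb]
    have := aux_mid_pos hβ0.le hβ1.le (by positivity : (0:ℝ) ≤ (j:ℝ))
    push_cast
    ring_nf
    ring_nf at this
    linarith
  have b_cvx : ∀ j : ℕ, b (j + 1) - b (j + 2) ≤ b j - b (j + 1) := by
    intro j
    have hφ := aux_phi_antitone hβ0 hβ1 (Set.mem_Ici.mpr (by positivity : (0:ℝ) ≤ (j:ℝ)))
      (Set.mem_Ici.mpr (by positivity : (0:ℝ) ≤ (j:ℝ) + 1))
      (by linarith : (j:ℝ) ≤ (j:ℝ) + 1)
    simp only [] at hφ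
    rw [hb j, hb (j+1), hb (j+2)]
    push_cast
    ring_nf
    ring_nf at hφ
    linarith
  set M := N - 1 with hM
  set c : ℕ → ℝ := fun m => b (min m M) - 2 * b (min (m+1) M) + b (min (m+2) M) with hc_def
  have hc : ∀ m, 0 ≤ c m := by
    intro m
    rcases le_or_gt (m + 2) M with h | h
    · have e1 : min m M = m := by omega
      have e2 : min (m+1) M = m+1 := by omega
      have e3 : min (m+2) M = m+2 := by omega
      simp only [hc_def, e1, e2, e3]
      have := b_cvx m
      linarith
    rcases le_or_gt (m + 1) M with h' | h'
    · have e1 : min m M = m := by omega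
      have e2 : min (m+1) M = m+1 := by omega
      have e3 : min (m+2) M = m+1 := by omega
      simp only [hc_def, e1, e2, e3]
      have := b_anti m
      linarith
    · have e1 : min m M = min m M := rfl
      have e2 : min (m+1) M = min m M := by omega
      have e3 : min (m+2) M = min m M := by omega
      simp only [hc_def, e2, e3]
      ring_nf
      linarith [le_refl (b (min m M))]
  have key : ∀ n : ℕ, n ≤ M →
      b n = (∑ m ∈ Finset.range M, c m * ((m + 1 - n : ℕ) : ℝ)) + b M := by
    intro n hn
    have ht := aux_tele (fun i => b (min i M)) n M hn
    have e1 : min n M = n := min_eq_left hn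
    have e2 : min M M = M := min_self M
    have e3 : min (M+1) M = M := by omega
    rw [e1, e2, e3, sub_self, mul_zero, sub_zero] at ht
    simp only [hc_def]
    have e4 : min (M+1+1) M = M := by omega
    rw [ht]
    ring
  -- rewrite every term of the double sum
  have step1 : ∑ k ∈ Finset.range N, ∑ j ∈ Finset.range N,
        b ((k : ℤ) - (j : ℤ)).natAbs * ⟪w j, w k⟫
      = (∑ k ∈ Finset.range N, ∑ j ∈ Finset.range N,
          (∑ m ∈ Finset.range M, c m * ((m + 1 - ((k : ℤ) - (j : ℤ)).natAbs : ℕ) : ℝ))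
            * ⟪w j, w k⟫)
        + ∑ k ∈ Finset.range N, ∑ j ∈ Finset.range N, b M * ⟪w j, w k⟫ := by
    rw [← Finset.sum_add_distrib]
    refine Finset.sum_congr rfl fun k hk => ?_
    rw [← Finset.sum_add_distrib]
    refine Finset.sum_congr rfl fun j hj => ?_
    rw [Finset.mem_range] at hk hj
    have hn : (((k : ℤ) - (j : ℤ)).natAbs) ≤ M := by omega
    rw [key _ hn, add_mul]
  rw [step1]
  have swap : ∀ (A C : ℕ) (F : ℕ → ℕ → ℕ → ℝ),
      ∑ k ∈ Finset.range A, ∑ j ∈ Finset.range A, ∑ m ∈ Finset.range C, F m j k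
        = ∑ m ∈ Finset.range C, ∑ k ∈ Finset.range A, ∑ j ∈ Finset.range A, F m j k := by
    intro A C F
    calc ∑ k ∈ Finset.range A, ∑ j ∈ Finset.range A, ∑ m ∈ Finset.range C, F m j k
        = ∑ k ∈ Finset.range A, ∑ m ∈ Finset.range C, ∑ j ∈ Finset.range A, F m j k :=
          Finset.sum_congr rfl fun k _ => Finset.sum_comm
      _ = ∑ m ∈ Finset.range C, ∑ k ∈ Finset.range A, ∑ j ∈ Finset.range A, F m j k :=
          Finset.sum_comm
  apply add_nonneg
  · -- main triangular part
    have e5 : ∑ k ∈ Finset.range N, ∑ j ∈ Finset.range N,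
          (∑ m ∈ Finset.range M, c m * ((m + 1 - ((k : ℤ) - (j : ℤ)).natAbs : ℕ) : ℝ))
            * ⟪w j, w k⟫
        = ∑ m ∈ Finset.range M, c m * (∑ k ∈ Finset.range N, ∑ j ∈ Finset.range N,
            ((m + 1 - ((k : ℤ) - (j : ℤ)).natAbs : ℕ) : ℝ) * ⟪w j, w k⟫) := by
      calc ∑ k ∈ Finset.range N, ∑ j ∈ Finset.range N,
            (∑ m ∈ Finset.range M, c m * ((m + 1 - ((k : ℤ) - (j : ℤ)).natAbs : ℕ) : ℝ))
              * ⟪w j, w k⟫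
          = ∑ k ∈ Finset.range N, ∑ j ∈ Finset.range N, ∑ m ∈ Finset.range M,
              (c m * ((m + 1 - ((k : ℤ) - (j : ℤ)).natAbs : ℕ) : ℝ)) * ⟪w j, w k⟫ :=
            Finset.sum_congr rfl fun k _ => Finset.sum_congr rfl fun j _ =>
              Finset.sum_mul _ _ _
        _ = ∑ m ∈ Finset.range M, ∑ k ∈ Finset.range N, ∑ j ∈ Finset.range N,
              (c m * ((m + 1 - ((k : ℤ) - (j : ℤ)).natAbs : ℕ) : ℝ)) * ⟪w j, w k⟫ :=
            swap N M _
        _ = ∑ m ∈ Finset.range M, c m * (∑ k ∈ Finset.range N, ∑ j ∈ Finset.range N,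
              ((m + 1 - ((k : ℤ) - (j : ℤ)).natAbs : ℕ) : ℝ) * ⟪w j, w k⟫) := by
            refine Finset.sum_congr rfl fun m _ => ?_
            rw [Finset.mul_sum]
            refine Finset.sum_congr rfl fun k _ => ?_
            rw [Finset.mul_sum]
            exact Finset.sum_congr rfl fun j _ => by ring
    rw [e5]
    apply Finset.sum_nonneg
    intro m _
    apply mul_nonneg (hc m)
    have hQ : ∑ k ∈ Finset.range N, ∑ j ∈ Finset.range N,
        ((m + 1 - ((k : ℤ) - (j : ℤ)).natAbs : ℕ) : ℝ) * ⟪w j, w k⟫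
      = ∑ t ∈ Finset.range (N + m), ∑ k ∈ Finset.range N, ∑ j ∈ Finset.range N,
          ((if j ≤ t ∧ t ≤ j + m then (1:ℝ) else 0) * (if k ≤ t ∧ t ≤ k + m then (1:ℝ) else 0))
            * ⟪w j, w k⟫ := by
      calc ∑ k ∈ Finset.range N, ∑ j ∈ Finset.range N,
            ((m + 1 - ((k : ℤ) - (j : ℤ)).natAbs : ℕ) : ℝ) * ⟪w j, w k⟫
          = ∑ k ∈ Finset.range N, ∑ j ∈ Finset.range N, ∑ t ∈ Finset.range (N + m),
              ((if j ≤ t ∧ t ≤ j + m then (1:ℝ) else 0) * (if k ≤ t ∧ t ≤ k + m then (1:ℝ) else 0))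
                * ⟪w j, w k⟫ := by
            refine Finset.sum_congr rfl fun k hk => Finset.sum_congr rfl fun j hj => ?_
            rw [Finset.mem_range] at hk hj
            rw [aux_cnt hj hk, Finset.sum_mul]
        _ = _ := swap N (N + m) _
    rw [hQ]
    apply Finset.sum_nonneg
    intro t _
    have hin := aux_inner (Finset.range N) (fun j => if j ≤ t ∧ t ≤ j + m then (1:ℝ) else 0) w
    rw [hin]
    exact real_inner_self_nonneg
  · -- constant part
    have e6 : ∑ k ∈ Finset.range N, ∑ j ∈ Finset.range N, b M * ⟪w j, w k⟫
        = b M * ∑ k ∈ Finset.range N, ∑ j ∈ Finset.range N, ⟪w j, w k⟫ := by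
      rw [Finset.mul_sum]
      exact Finset.sum_congr rfl fun k _ => (Finset.mul_sum _ _ _).symm
    rw [e6]
    apply mul_nonneg (b_nonneg M)
    have hin := aux_inner (Finset.range N) (fun _ => (1:ℝ)) w
    simp only [one_mul, one_smul] at hin
    rw [hin]
    exact real_inner_self_nonneg
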